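/- Let k be a field, V an infinite-dimensional k-vector space, E the endomorphism ring of V, S the set of endomorphisms of V of finite rank, and let R = k·1 + S be the k-subalgebra of E generated by the identity and S. Then the Jacobson radical of R is zero. -/

import Mathlib

universe u v

variable (k : Type u) (V : Type v) [Field k] [AddCommGroup V] [Module k V]

/-- The set of finite-rank endomorphisms of the `k`-vector space `V`. -/
def finiteRankEnd : Set (Module.End k V) :=
  {s | FiniteDimensional k (LinearMap.range s)}

variable {k V}

lemma finiteRankEnd.add {s t : Module.End k V} (hs : s ∈ finiteRankEnd k V)
    (ht : t ∈ finiteRankEnd k V) : s + t ∈ finiteRankEnd k V := by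
  haveI : FiniteDimensional k (LinearMap.range s) := hs
  haveI : FiniteDimensional k (LinearMap.range t) := ht
  refine Submodule.finiteDimensional_of_le (S₂ := LinearMap.range s ⊔ LinearMap.range t) ?_
  rintro x ⟨v, rfl⟩
  exact Submodule.mem_sup.2 ⟨s v, ⟨v, rfl⟩, t v, ⟨v, rfl⟩, rfl⟩

lemma finiteRankEnd.neg {s : Module.End k V} (hs : s ∈ finiteRankEnd k V) :
    -s ∈ finiteRankEnd k V := by
  haveI : FiniteDimensional k (LinearMap.range s) := hs
  show FiniteDimensional k (LinearMap.range (-s))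
  rw [LinearMap.range_neg]
  exact hs

lemma finiteRankEnd.smul (a : k) {s : Module.End k V} (hs : s ∈ finiteRankEnd k V) :
    a • s ∈ finiteRankEnd k V := by
  haveI : FiniteDimensional k (LinearMap.range s) := hs
  refine Submodule.finiteDimensional_of_le (S₂ := LinearMap.range s) ?_
  rintro x ⟨v, rfl⟩
  exact ⟨a • v, by simp⟩

lemma finiteRankEnd.mul_left (f : Module.End k V) {s : Module.End k V}
    (hs : s ∈ finiteRankEnd k V) : s * f ∈ finiteRankEnd k V := by
  haveI : FiniteDimensional k (LinearMap.range s) := hs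
  refine Submodule.finiteDimensional_of_le (S₂ := LinearMap.range s) ?_
  rintro x ⟨v, rfl⟩
  exact ⟨f v, rfl⟩

lemma finiteRankEnd.mul_right (f : Module.End k V) {s : Module.End k V}
    (hs : s ∈ finiteRankEnd k V) : f * s ∈ finiteRankEnd k V := by
  haveI : FiniteDimensional k (LinearMap.range s) := hs
  show FiniteDimensional k (LinearMap.range (f * s))
  rw [Module.End.mul_eq_comp, LinearMap.range_comp]
  infer_instance

variable (k V) in
/-- The subring `R = k·1 + S` of the endomorphism ring of `V`, where `S` is the
set of finite-rank endomorphisms. -/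
def kPlusFiniteRank : Subring (Module.End k V) where
  carrier := {f | ∃ a : k, ∃ s ∈ finiteRankEnd k V, f = a • 1 + s}
  zero_mem' := ⟨0, 0, by
    show FiniteDimensional k (LinearMap.range (0 : Module.End k V))
    rw [LinearMap.range_zero]; infer_instance, by simp⟩
  one_mem' := ⟨1, 0, by
    show FiniteDimensional k (LinearMap.range (0 : Module.End k V))
    rw [LinearMap.range_zero]; infer_instance, by simp⟩
  add_mem' := by
    rintro f g ⟨a, s, hs, rfl⟩ ⟨b, t, ht, rfl⟩
    exact ⟨a + b, s + t, finiteRankEnd.add hs ht, by rw [add_smul]; abel⟩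
  neg_mem' := by
    rintro f ⟨a, s, hs, rfl⟩
    exact ⟨-a, -s, finiteRankEnd.neg hs, by rw [neg_smul]; abel⟩
  mul_mem' := by
    rintro f g ⟨a, s, hs, rfl⟩ ⟨b, t, ht, rfl⟩
    refine ⟨a * b, a • t + b • s + s * t, ?_, ?_⟩
    · exact finiteRankEnd.add (finiteRankEnd.add (finiteRankEnd.smul a ht)
        (finiteRankEnd.smul b hs)) ((finiteRankEnd.mul_left t) hs)
    · simp only [mul_add, add_mul, smul_mul_assoc, mul_smul_comm, one_mul, mul_one]
      module

/-- For an infinite-dimensional vector space `V` over a field `k`, the Jacobson radical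
(the intersection of the maximal left ideals) of `R = k·1 + S` is zero. -/
lemma jac_left_inv {R : Type*} [Ring R] {z : R}
    (hz : z ∈ Ideal.jacobson (⊥ : Ideal R)) : ∃ u : R, u * (1 + z) = 1 := by
  by_contra h
  push_neg at h
  have hI : Ideal.span {(1 + z)} ≠ ⊤ := by
    intro htop
    have h1 : (1 : R) ∈ Ideal.span {1 + z} := htop ▸ Submodule.mem_top
    rw [Ideal.span, Submodule.mem_span_singleton] at h1
    obtain ⟨u, hu⟩ := h1
    exact h u (by rwa [smul_eq_mul] at hu)
  obtain ⟨M, hM, hle⟩ := Ideal.exists_le_maximal _ hI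
  have hzM : z ∈ M := by
    rw [Ideal.jacobson] at hz
    exact Ideal.mem_sInf.1 hz ⟨bot_le, hM⟩
  have h1M : (1 + z) ∈ M := hle (Ideal.subset_span rfl)
  have : (1 : R) ∈ M := by
    have := M.sub_mem h1M hzM; simpa using this
  exact hM.ne_top ((Ideal.eq_top_iff_one M).2 this)

/-- A left-invertible element of `kPlusFiniteRank` is injective as an endomorphism. -/
lemma injective_of_left_inv {f u : kPlusFiniteRank k V} (hu : u * f = 1) :
    Function.Injective (f : Module.End k V) := by
  intro x y hxy
  have : ((u : Module.End k V) * (f : Module.End k V)) x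
      = ((u : Module.End k V) * (f : Module.End k V)) y := by
    simp only [Module.End.mul_apply, hxy]
  rwa [← Subring.coe_mul, hu, Subring.coe_one, Module.End.one_apply, Module.End.one_apply] at this

/-- An injective finite-rank endomorphism forces finite-dimensionality. -/
lemma finite_of_injective_finiteRank {s : Module.End k V}
    (hs : s ∈ finiteRankEnd k V) (hinj : Function.Injective s) : Module.Finite k V := by
  haveI : FiniteDimensional k (LinearMap.range s) := hs
  exact Module.Finite.equiv (LinearEquiv.ofInjective s hinj).symm

theorem stmt14 (k : Type u) (V : Type v) [Field k] [AddCommGroup V] [Module k V]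
    (hV : ¬ Module.Finite k V) :
    Ideal.jacobson (⊥ : Ideal (kPlusFiniteRank k V)) = ⊥ := by
  rw [eq_bot_iff]
  intro z hz
  rw [Ideal.mem_bot]
  obtain ⟨a, s, hs, hzs⟩ := z.2
  -- Step 1: a = 0
  have ha : a = 0 := by
    by_contra ha
    have hr : ((-a⁻¹ : k) • 1 : Module.End k V) ∈ kPlusFiniteRank k V := by
      refine ⟨-a⁻¹, 0, ?_, by simp⟩
      show FiniteDimensional k (LinearMap.range (0 : Module.End k V))
      rw [LinearMap.range_zero]; infer_instance
    set r : kPlusFiniteRank k V := ⟨(-a⁻¹ : k) • 1, hr⟩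
    have hmem : r * z ∈ Ideal.jacobson (⊥ : Ideal (kPlusFiniteRank k V)) :=
      Ideal.mul_mem_left _ r hz
    obtain ⟨u, hu⟩ := jac_left_inv hmem
    have hinj := injective_of_left_inv hu
    have hcoe : ((1 + r * z : kPlusFiniteRank k V) : Module.End k V)
        = (-a⁻¹ : k) • s := by
      push_cast
      show 1 + ((-a⁻¹ : k) • 1) * (z : Module.End k V) = (-a⁻¹ : k) • s
      rw [hzs]
      simp only [smul_mul_assoc, one_mul, mul_add, mul_one, smul_add, smul_smul]
      rw [neg_mul, inv_mul_cancel₀ ha]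
      module
    rw [hcoe] at hinj
    exact hV (finite_of_injective_finiteRank (finiteRankEnd.smul _ hs) hinj)
  -- so z = s as endomorphism
  have hzs' : (z : Module.End k V) = s := by rw [hzs, ha, zero_smul, zero_add]
  -- Step 2: show s = 0
  by_contra hzne
  have hsne : (z : Module.End k V) ≠ 0 := fun h => hzne (Subtype.ext h)
  obtain ⟨v, hv⟩ : ∃ v, (z : Module.End k V) v ≠ 0 := by
    by_contra h
    push_neg at h
    exact hsne (LinearMap.ext fun v => by simpa using h v)
  -- get a functional φ with φ (z v) = 1
  have hinj0 : LinearMap.ker (LinearMap.toSpanSingleton k V ((z : Module.End k V) v)) = ⊥ := by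
    rw [LinearMap.ker_eq_bot]
    intro x y hxy
    simp only [LinearMap.toSpanSingleton_apply] at hxy
    exact smul_left_injective k hv (by simpa using hxy)
  obtain ⟨φ, hφ⟩ := (LinearMap.toSpanSingleton k V ((z : Module.End k V) v)).exists_leftInverse_of_injective hinj0
  have hφ1 : φ ((z : Module.End k V) v) = 1 := by
    have := LinearMap.congr_fun hφ 1
    simpa using this
  -- build rank-one g with g (z v) = v
  set g : Module.End k V := LinearMap.smulRight φ v with hg
  have hgS : g ∈ finiteRankEnd k V := by
    refine Submodule.finiteDimensional_of_le (S₂ := Submodule.span k {v}) ?_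
    rintro x ⟨w, rfl⟩
    exact Submodule.smul_mem _ _ (Submodule.mem_span_singleton_self v)
  have hgR : g ∈ kPlusFiniteRank k V := ⟨0, g, hgS, by simp⟩
  set G : kPlusFiniteRank k V := ⟨g, hgR⟩
  have hmem : -(G * z) ∈ Ideal.jacobson (⊥ : Ideal (kPlusFiniteRank k V)) :=
    neg_mem (Ideal.mul_mem_left _ G hz)
  obtain ⟨u, hu⟩ := jac_left_inv hmem
  have hinj := injective_of_left_inv hu
  have h0 : ((1 + -(G * z) : kPlusFiniteRank k V) : Module.End k V) v = 0 := by
    push_cast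
    simp only [LinearMap.add_apply, LinearMap.neg_apply, Module.End.one_apply,
      Module.End.mul_apply]
    show v + -(g ((z : Module.End k V) v)) = 0
    rw [hg]
    simp [LinearMap.smulRight_apply, hφ1]
  have hv0 : v ≠ 0 := fun h => hv (by rw [h, map_zero])
  have : v = 0 := by
    apply hinj
    rw [h0, map_zero]
  exact hv0 this
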